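/- If (x₁,x₂,x₃,x₄) satisfies x₁ ≥ x₄ ≥ x₃ ≥ x₂ ≥ 0 (Case C₅), then the solution of x_{n+4} = max{x_{n+3},x_{n+2},x_{n+1},0} - x_n satisfies (x₁₂, x₁₃, x₁₄, x₁₅) = (x₁, x₂, x₄, x₂ + x₄ - x₃). -/
import Mathlib


theorem stmt_17 (x : ℕ → ℝ)
    (hord : x 1 ≥ x 4 ∧ x 4 ≥ x 3 ∧ x 3 ≥ x 2 ∧ x 2 ≥ 0)
    (hrec : ∀ n ≥ 1, x (n + 4) = max (max (max (x (n + 3)) (x (n + 2))) (x (n + 1))) 0 - x n) :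
    x 12 = x 1 ∧ x 13 = x 2 ∧ x 14 = x 4 ∧ x 15 = x 2 + x 4 - x 3 := by
  obtain ⟨o1, o2, o3, o4⟩ := hord
  have r1 := hrec 1 (by norm_num)
  have r2 := hrec 2 (by norm_num)
  have r3 := hrec 3 (by norm_num)
  have r4 := hrec 4 (by norm_num)
  have r5 := hrec 5 (by norm_num)
  have r6 := hrec 6 (by norm_num)
  have r7 := hrec 7 (by norm_num)
  have r8 := hrec 8 (by norm_num)
  have r9 := hrec 9 (by norm_num)
  have r10 := hrec 10 (by norm_num)
  have r11 := hrec 11 (by norm_num)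
  norm_num at r1 r2 r3 r4 r5 r6 r7 r8 r9 r10 r11
  have h5 : x 5 = x 4 - x 1 := by
    rw [r1, max_eq_left (show x 3 ≤ x 4 by linarith),
      max_eq_left (show x 2 ≤ x 4 by linarith),
      max_eq_left (show (0:ℝ) ≤ x 4 by linarith)]
  have h6 : x 6 = x 4 - x 2 := by
    rw [r2, max_eq_right (show x 5 ≤ x 4 by linarith),
      max_eq_left (show x 3 ≤ x 4 by linarith),
      max_eq_left (show (0:ℝ) ≤ x 4 by linarith)]
  have h7 : x 7 = x 4 - x 3 := by
    rw [r3, max_eq_left (show x 5 ≤ x 6 by linarith),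
      max_eq_right (show x 6 ≤ x 4 by linarith),
      max_eq_left (show (0:ℝ) ≤ x 4 by linarith)]
  have h8 : x 8 = -x 2 := by
    rw [r4, max_eq_right (show x 7 ≤ x 6 by linarith),
      max_eq_left (show x 5 ≤ x 6 by linarith),
      max_eq_left (show (0:ℝ) ≤ x 6 by linarith)]
    linarith
  have h9 : x 9 = x 1 - x 2 := by
    rw [r5, max_eq_right (show x 8 ≤ x 7 by linarith),
      max_eq_right (show x 7 ≤ x 6 by linarith),
      max_eq_left (show (0:ℝ) ≤ x 6 by linarith)]
    linarith
  have h10 : x 10 = x 1 - x 4 := by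
    rw [r6, max_eq_left (show x 8 ≤ x 9 by linarith),
      max_eq_left (show x 7 ≤ x 9 by linarith),
      max_eq_left (show (0:ℝ) ≤ x 9 by linarith)]
    linarith
  have h11 : x 11 = x 1 - x 2 - x 4 + x 3 := by
    rw [r7, max_eq_right (show x 10 ≤ x 9 by linarith),
      max_eq_left (show x 8 ≤ x 9 by linarith),
      max_eq_left (show (0:ℝ) ≤ x 9 by linarith)]
    linarith
  have h12 : x 12 = x 1 := by
    rw [r8, max_eq_left (show x 10 ≤ x 11 by linarith),
      max_eq_right (show x 11 ≤ x 9 by linarith),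
      max_eq_left (show (0:ℝ) ≤ x 9 by linarith)]
    linarith
  have h13 : x 13 = x 2 := by
    rw [r9, max_eq_left (show x 11 ≤ x 12 by linarith),
      max_eq_left (show x 10 ≤ x 12 by linarith),
      max_eq_left (show (0:ℝ) ≤ x 12 by linarith)]
    linarith
  have h14 : x 14 = x 4 := by
    rw [r10, max_eq_right (show x 13 ≤ x 12 by linarith),
      max_eq_left (show x 11 ≤ x 12 by linarith),
      max_eq_left (show (0:ℝ) ≤ x 12 by linarith)]
    linarith
  have h15 : x 15 = x 2 + x 4 - x 3 := by
    rw [r11, max_eq_left (show x 13 ≤ x 14 by linarith),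
      max_eq_right (show x 14 ≤ x 12 by linarith),
      max_eq_left (show (0:ℝ) ≤ x 12 by linarith)]
    linarith
  exact ⟨h12, h13, h14, h15⟩
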